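/- For all integers m ≥ 2 and x ≥ 1, the cardinality of the LOCO code satisfies the recursion N(m,x) = N(m−1,x) + N(m−x−1,x), where any term N(k,x) with k ≤ 1 is interpreted, by convention, as 2. -/
import Mathlib


/-- `noForbidden m x c` says the binary word `c = (c_{m-1}, …, c_0)` contains no contiguous
subword of the form `0 1^y 0` or `1 0^y 1` for any `1 ≤ y ≤ x`. -/
def noForbidden (m x : ℕ) (c : Fin m → Bool) : Prop :=
  ∀ j y : ℕ, 1 ≤ y → y ≤ x → (h : j + y + 1 < m) →
    ¬ ((∀ k, 1 ≤ k → (hk : k ≤ y) → c ⟨j + k, by omega⟩ = ! c ⟨j, by omega⟩) ∧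
        c ⟨j + y + 1, h⟩ = c ⟨j, by omega⟩)

/-- `N(m, x)`: the cardinality of the LOCO code `C(m, x)`. -/
noncomputable def locoN (m x : ℕ) : ℕ := Nat.card {c : Fin m → Bool // noForbidden m x c}

/-- `N(k, x)` extended to integer `k` by the convention `N(k, x) = 2` for `k ≤ 1`. -/
noncomputable def Nex (k : ℤ) (x : ℕ) : ℤ := if k ≤ 1 then 2 else (locoN k.toNat x : ℤ)

/-- Strict lexicographic order on binary words, comparing bits from `c_{m-1}`
(most significant) down to `c_0`, with `0 < 1`. -/
def lexLt (m : ℕ) (d c : Fin m → Bool) : Prop :=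
  ∃ i : Fin m, d i = false ∧ c i = true ∧ ∀ j : Fin m, (i : ℕ) < (j : ℕ) → d j = c j

/-- The index `g(m, x, c)` of a codeword: the number of codewords of `C(m, x)` that
precede `c` in lexicographic order. -/
noncomputable def locoIdx (m x : ℕ) (c : Fin m → Bool) : ℕ :=
  Nat.card {d : Fin m → Bool // noForbidden m x d ∧ lexLt m d c}

lemma cix {m : ℕ} (c : Fin m → Bool) {a b : ℕ} {ha : a < m} {hb : b < m} (hab : a = b) :
    c ⟨a, ha⟩ = c ⟨b, hb⟩ := by subst hab; rfl

lemma noForbidden_restrict {m n x : ℕ} (h : n ≤ m) {c : Fin m → Bool}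
    (hc : noForbidden m x c) :
    noForbidden n x (fun i => c ⟨i.1, lt_of_lt_of_le i.2 h⟩) := by
  rintro j y hy1 hy2 hh ⟨h1, h2⟩
  refine hc j y hy1 hy2 (by omega) ⟨fun k hk1 hk2 => ?_, ?_⟩
  · exact h1 k hk1 hk2
  · exact h2

lemma run_at_top {m x : ℕ} (hm : 2 ≤ m) {c : Fin m → Bool} (hc : noForbidden m x c)
    (hne : c ⟨m-1, by omega⟩ ≠ c ⟨m-2, by omega⟩) :
    ∀ i : ℕ, (_hi : i < m - 1) → m - 1 ≤ i + x + 1 → c ⟨i, by omega⟩ = !c ⟨m-1, by omega⟩ := by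
  suffices H : ∀ K i : ℕ, m - 2 - i = K → (_hi : i < m - 1) → m - 1 ≤ i + x + 1 →
      c ⟨i, by omega⟩ = !c ⟨m-1, by omega⟩ by
    intro i hi hix; exact H _ i rfl hi hix
  intro K
  induction K using Nat.strong_induction_on with
  | _ K IH =>
    intro i hK hi hix
    by_cases hci : c ⟨i, by omega⟩ = c ⟨m-1, by omega⟩
    · exfalso
      have hine : i ≠ m - 2 := by
        rintro rfl; exact hne hci.symm
      have hy1 : 1 ≤ m - 2 - i := by omega
      refine hc i (m - 2 - i) hy1 (by omega) (by omega) ⟨fun k hk1 hk2 => ?_, ?_⟩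
      · have hv : c ⟨i + k, by omega⟩ = !c ⟨m-1, by omega⟩ :=
          IH (m - 2 - (i + k)) (by omega) (i + k) rfl (by omega) (by omega)
        have : c ⟨i + k, by omega⟩ = !c ⟨i, by omega⟩ := by rw [hv, hci]
        exact this
      · have : c ⟨i + (m - 2 - i) + 1, by omega⟩ = c ⟨i, by omega⟩ :=
          (cix c (by omega)).trans hci.symm
        exact this
    · have := Bool.eq_not_iff.mpr hci
      exact this

/-- extend by duplicating the top bit -/
def extA (m : ℕ) (hm : 2 ≤ m) (d : Fin (m-1) → Bool) : Fin m → Bool :=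
  fun i => if h : i.1 < m - 1 then d ⟨i.1, h⟩ else d ⟨m-2, by omega⟩

lemma extA_lt {m : ℕ} (hm : 2 ≤ m) (d : Fin (m-1) → Bool) {i : ℕ} (him : i < m)
    (h : i < m - 1) : extA m hm d ⟨i, him⟩ = d ⟨i, h⟩ := dif_pos h

lemma extA_last {m : ℕ} (hm : 2 ≤ m) (d : Fin (m-1) → Bool) {i : ℕ} (him : i < m)
    (h : i = m - 1) : extA m hm d ⟨i, him⟩ = d ⟨m-2, by omega⟩ :=
  dif_neg (show ¬ i < m - 1 by omega)

lemma noForbidden_extA {m x : ℕ} (hm : 2 ≤ m) {d : Fin (m-1) → Bool}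
    (hd : noForbidden (m-1) x d) : noForbidden m x (extA m hm d) := by
  rintro j y hy1 hy2 h ⟨h1, h2⟩
  rcases Nat.lt_or_ge (j+y+1) (m-1) with hlt | hge
  · refine hd j y hy1 hy2 hlt ⟨fun k hk1 hk2 => ?_, ?_⟩
    · have e1 := h1 k hk1 hk2
      rw [extA_lt hm d _ (by omega), extA_lt hm d _ (by omega)] at e1
      exact e1
    · have e2 := h2
      rw [extA_lt hm d _ (by omega), extA_lt hm d _ (by omega)] at e2
      exact e2
  · have hje : j + y + 1 = m - 1 := by omega
    have ha := h1 y hy1 le_rfl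
    have hb := h2
    rw [extA_lt hm d _ (by omega), extA_lt hm d _ (by omega)] at ha
    rw [extA_last hm d _ (by omega), extA_lt hm d _ (by omega)] at hb
    have : d ⟨j+y, by omega⟩ = d ⟨m-2, by omega⟩ := cix d (by omega)
    rw [this, hb] at ha
    simp at ha

/-- extend by a run of `x+1` copies of the top bit, then one flipped bit -/
def extB (m x : ℕ) (h : x + 2 ≤ m) (d : Fin (m-x-1) → Bool) : Fin m → Bool :=
  fun i => if hi : i.1 < m - x - 1 then d ⟨i.1, hi⟩
           else if i.1 = m - 1 then !d ⟨m-x-2, by omega⟩ else d ⟨m-x-2, by omega⟩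

lemma extB_lo {m x : ℕ} (h : x + 2 ≤ m) (d : Fin (m-x-1) → Bool) {i : ℕ} (him : i < m)
    (hi : i < m - x - 1) : extB m x h d ⟨i, him⟩ = d ⟨i, hi⟩ := dif_pos hi

lemma extB_mid {m x : ℕ} (h : x + 2 ≤ m) (d : Fin (m-x-1) → Bool) {i : ℕ} (him : i < m)
    (hi1 : m - x - 2 ≤ i) (hi2 : i ≤ m - 2) :
    extB m x h d ⟨i, him⟩ = d ⟨m-x-2, by omega⟩ := by
  rcases Nat.lt_or_ge i (m - x - 1) with hlo | hhi
  · rw [extB_lo h d him hlo]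
    exact cix d (by omega)
  · rw [extB, dif_neg (show ¬ i < m - x - 1 by omega), if_neg (show ¬ i = m - 1 by omega)]

lemma extB_last {m x : ℕ} (h : x + 2 ≤ m) (d : Fin (m-x-1) → Bool) {i : ℕ} (him : i < m)
    (hi : i = m - 1) : extB m x h d ⟨i, him⟩ = !d ⟨m-x-2, by omega⟩ := by
  rw [extB, dif_neg (show ¬ i < m - x - 1 by omega), if_pos hi]

lemma noForbidden_extB {m x : ℕ} (hm2 : x + 2 ≤ m) {d : Fin (m-x-1) → Bool}
    (hd : noForbidden (m-x-1) x d) : noForbidden m x (extB m x hm2 d) := by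
  rintro j y hy1 hy2 h ⟨h1, h2⟩
  rcases Nat.lt_or_ge (j+y+1) (m-x-1) with hc1 | hc1
  · -- entirely inside d
    refine hd j y hy1 hy2 hc1 ⟨fun k hk1 hk2 => ?_, ?_⟩
    · have e1 := h1 k hk1 hk2
      rw [extB_lo hm2 d _ (by omega), extB_lo hm2 d _ (by omega)] at e1
      exact e1
    · have e2 := h2
      rw [extB_lo hm2 d _ (by omega), extB_lo hm2 d _ (by omega)] at e2
      exact e2
  · rcases Nat.lt_or_ge j (m - x - 2) with hc2 | hc2
    · -- j below the run, pattern end inside the run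
      have hend : j + y + 1 ≤ m - 2 := by omega
      have e1 := h1 (m - x - 2 - j) (by omega) (by omega)
      rw [extB_mid hm2 d _ (by omega) (by omega), extB_lo hm2 d _ (by omega)] at e1
      have e2 := h2
      rw [extB_mid hm2 d _ (by omega) (by omega), extB_lo hm2 d _ (by omega)] at e2
      rw [e2] at e1
      simp at e1
    · -- j inside the run
      have e := h1 1 le_rfl hy1
      rw [extB_mid hm2 d _ (by omega) (by omega), extB_mid hm2 d _ (by omega) (by omega)] at e
      simp at e

/-- the word `b (!b)^(m-1)` -/
def extS (m : ℕ) (b : Bool) : Fin m → Bool := fun i => if i.1 = m - 1 then b else !b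

lemma extS_last {m : ℕ} (b : Bool) {i : ℕ} (him : i < m) (h : i = m - 1) :
    extS m b ⟨i, him⟩ = b := if_pos h

lemma extS_low {m : ℕ} (b : Bool) {i : ℕ} (him : i < m) (h : i ≠ m - 1) :
    extS m b ⟨i, him⟩ = !b := if_neg h

lemma noForbidden_extS {m : ℕ} (x : ℕ) (b : Bool) : noForbidden m x (extS m b) := by
  rintro j y hy1 hy2 h ⟨h1, h2⟩
  have e := h1 1 le_rfl hy1
  rw [extS_low b (by omega) (by omega), extS_low b (by omega) (by omega)] at e
  simp at e

def drop1 (m : ℕ) (c : Fin m → Bool) : Fin (m-1) → Bool :=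
  fun i => c ⟨i.1, lt_of_lt_of_le i.2 (Nat.sub_le m 1)⟩

def dropB (m x : ℕ) (c : Fin m → Bool) : Fin (m-x-1) → Bool :=
  fun i => c ⟨i.1, lt_of_lt_of_le i.2 ((Nat.sub_le _ _).trans (Nat.sub_le m x))⟩

lemma cardA {m x : ℕ} (hm : 2 ≤ m) :
    Nat.card {c : Fin m → Bool // noForbidden m x c ∧
      c ⟨m-1, by omega⟩ = c ⟨m-2, by omega⟩} = locoN (m-1) x := by
  rw [locoN]
  apply Nat.card_congr
  refine ⟨fun c => ⟨drop1 m c.1, noForbidden_restrict (Nat.sub_le m 1) c.2.1⟩,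
    fun d => ⟨extA m hm d.1, noForbidden_extA hm d.2, ?_⟩, ?_, ?_⟩
  · rw [extA_last hm d.1 (by omega) rfl, extA_lt hm d.1 (by omega) (by omega)]
  · rintro ⟨c, hc, hq⟩
    apply Subtype.ext
    funext i
    show extA m hm (drop1 m c) i = c i
    rcases Nat.lt_or_ge i.1 (m-1) with hlt | hge
    · exact extA_lt hm (drop1 m c) i.2 hlt
    · have hi : i = ⟨m-1, by omega⟩ := Fin.ext (by have := i.2; simp; omega)
      rw [hi, extA_last hm _ (by omega) rfl]
      exact hq.symm
  · rintro ⟨d, hd⟩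
    apply Subtype.ext
    funext i
    exact extA_lt hm d (lt_of_lt_of_le i.2 (Nat.sub_le m 1)) i.2

lemma cardB_small {m x : ℕ} (hm : 2 ≤ m) (hmx : m ≤ x + 1) :
    Nat.card {c : Fin m → Bool // noForbidden m x c ∧
      ¬ c ⟨m-1, by omega⟩ = c ⟨m-2, by omega⟩} = 2 := by
  have e : {c : Fin m → Bool // noForbidden m x c ∧
      ¬ c ⟨m-1, by omega⟩ = c ⟨m-2, by omega⟩} ≃ Bool := by
    refine ⟨fun c => c.1 ⟨m-1, by omega⟩, fun b => ⟨extS m b, noForbidden_extS x b, ?_⟩, ?_, ?_⟩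
    · rw [extS_last b (by omega) rfl, extS_low b (by omega) (by omega)]
      simp
    · rintro ⟨c, hc, hq⟩
      apply Subtype.ext
      funext i
      rcases eq_or_ne i.1 (m-1) with he | he
      · have hi : i = ⟨m-1, by omega⟩ := Fin.ext (by simpa using he)
        rw [hi]
        exact extS_last _ (by omega) rfl
      · have h2 : c ⟨i.1, i.2⟩ = !c ⟨m-1, by omega⟩ :=
          run_at_top hm hc hq i.1 (by have := i.2; omega) (by omega)
        exact (extS_low _ i.2 he).trans h2.symm
    · intro b
      exact extS_last b (by omega) rfl
  rw [Nat.card_congr e, Nat.card_eq_fintype_card, Fintype.card_bool]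

lemma cardB_big {m x : ℕ} (hx : 1 ≤ x) (hm2 : x + 2 ≤ m) :
    Nat.card {c : Fin m → Bool // noForbidden m x c ∧
      ¬ c ⟨m-1, by omega⟩ = c ⟨m-2, by omega⟩} = locoN (m-x-1) x := by
  rw [locoN]
  apply Nat.card_congr
  refine ⟨fun c => ⟨dropB m x c.1,
      noForbidden_restrict ((Nat.sub_le _ _).trans (Nat.sub_le m x)) c.2.1⟩,
    fun d => ⟨extB m x hm2 d.1, noForbidden_extB hm2 d.2, ?_⟩, ?_, ?_⟩
  · rw [extB_last hm2 d.1 (by omega) rfl, extB_mid hm2 d.1 (by omega) (by omega) (by omega)]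
    simp
  · rintro ⟨c, hc, hq⟩
    apply Subtype.ext
    funext i
    have hrun : ∀ p : ℕ, (hp1 : m - x - 2 ≤ p) → (hp2 : p ≤ m - 2) →
        c ⟨p, by omega⟩ = !c ⟨m-1, by omega⟩ := by
      intro p hp1 hp2
      exact run_at_top (by omega) hc hq p (by omega) (by omega)
    show extB m x hm2 (dropB m x c) i = c i
    rcases Nat.lt_or_ge i.1 (m-x-1) with hlo | hhi
    · exact extB_lo hm2 (dropB m x c) i.2 hlo
    · rcases eq_or_ne i.1 (m-1) with he | he
      · have hi : i = ⟨m-1, by omega⟩ := Fin.ext (by simpa using he)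
        rw [hi]
        have h1 : extB m x hm2 (dropB m x c) ⟨m-1, by omega⟩
            = !dropB m x c ⟨m-x-2, by omega⟩ := extB_last hm2 _ (by omega) rfl
        have h2 : dropB m x c ⟨m-x-2, by omega⟩ = !c ⟨m-1, by omega⟩ :=
          hrun (m-x-2) le_rfl (by omega)
        rw [h1, h2]
        simp
      · have h1 : extB m x hm2 (dropB m x c) ⟨i.1, i.2⟩
            = dropB m x c ⟨m-x-2, by omega⟩ :=
          extB_mid hm2 _ i.2 (by omega) (by have := i.2; omega)
        have h2 : dropB m x c ⟨m-x-2, by omega⟩ = !c ⟨m-1, by omega⟩ :=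
          hrun (m-x-2) le_rfl (by omega)
        have h4 : c ⟨i.1, i.2⟩ = !c ⟨m-1, by omega⟩ :=
          hrun i.1 (by omega) (by have := i.2; omega)
        exact (h1.trans h2).trans h4.symm
  · rintro ⟨d, hd⟩
    apply Subtype.ext
    funext i
    exact extB_lo hm2 d (lt_of_lt_of_le i.2 ((Nat.sub_le _ _).trans (Nat.sub_le m x))) i.2

lemma locoN_split {m x : ℕ} (hm : 2 ≤ m) :
    locoN m x = locoN (m-1) x
      + Nat.card {c : Fin m → Bool // noForbidden m x c ∧
          ¬ c ⟨m-1, by omega⟩ = c ⟨m-2, by omega⟩} := by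
  classical
  rw [locoN, ← cardA (x := x) hm, ← Nat.card_sum]
  exact Nat.card_congr
    (((Equiv.sumCompl fun c : {c : Fin m → Bool // noForbidden m x c} =>
        c.1 ⟨m-1, by omega⟩ = c.1 ⟨m-2, by omega⟩).symm.trans
      (Equiv.sumCongr
        (Equiv.subtypeSubtypeEquivSubtypeInter (fun c : Fin m → Bool => noForbidden m x c)
          (fun c => c ⟨m-1, by omega⟩ = c ⟨m-2, by omega⟩))
        (Equiv.subtypeSubtypeEquivSubtypeInter (fun c : Fin m → Bool => noForbidden m x c)
          (fun c => ¬ c ⟨m-1, by omega⟩ = c ⟨m-2, by omega⟩)))))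

lemma locoN_one (x : ℕ) : locoN 1 x = 2 := by
  have hall : ∀ c : Fin 1 → Bool, noForbidden 1 x c := by
    intro c j y hy1 hy2 h
    omega
  rw [locoN, Nat.card_congr (Equiv.subtypeUnivEquiv hall),
    Nat.card_congr (Equiv.funUnique (Fin 1) Bool), Nat.card_eq_fintype_card,
    Fintype.card_bool]

lemma locoN_rec_small {m x : ℕ} (hm : 2 ≤ m) (hmx : m ≤ x + 1) :
    locoN m x = locoN (m-1) x + 2 := by
  rw [locoN_split hm, cardB_small hm hmx]

lemma locoN_rec_big {m x : ℕ} (hx : 1 ≤ x) (hm2 : x + 2 ≤ m) :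
    locoN m x = locoN (m-1) x + locoN (m-x-1) x := by
  rw [locoN_split (by omega), cardB_big hx hm2]

/-- For all integers `m ≥ 2` and `x ≥ 1`,
`N(m, x) = N(m - 1, x) + N(m - x - 1, x)`, where any term `N(k, x)` with `k ≤ 1`
is interpreted, by convention, as `2`. -/
theorem loco_card_recursion (m x : ℕ) (hm : 2 ≤ m) (hx : 1 ≤ x) :
    Nex (m : ℤ) x = Nex ((m : ℤ) - 1) x + Nex ((m : ℤ) - (x : ℤ) - 1) x := by
  have e1 : Nex (m : ℤ) x = (locoN m x : ℤ) := by
    rw [Nex, if_neg (by omega : ¬ (m : ℤ) ≤ 1), Int.toNat_natCast]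
  have e2 : Nex ((m : ℤ) - 1) x = (locoN (m-1) x : ℤ) := by
    rcases eq_or_lt_of_le hm with h2 | h3
    · rw [Nex, if_pos (by omega : (m : ℤ) - 1 ≤ 1), ← h2]
      norm_num [locoN_one]
    · rw [Nex, if_neg (by omega : ¬ (m : ℤ) - 1 ≤ 1),
        (by omega : (m : ℤ) - 1 = ((m - 1 : ℕ) : ℤ)), Int.toNat_natCast]
  rcases Nat.lt_or_ge m (x + 2) with hsm | hbg
  · -- m ≤ x + 1
    have e3 : Nex ((m : ℤ) - (x : ℤ) - 1) x = 2 := by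
      rw [Nex, if_pos (by omega)]
    rw [e1, e2, e3, locoN_rec_small hm (by omega)]
    push_cast
    ring
  · -- m ≥ x + 2
    have e3 : Nex ((m : ℤ) - (x : ℤ) - 1) x = (locoN (m-x-1) x : ℤ) := by
      rcases eq_or_lt_of_le hbg with h2 | h3
      · rw [Nex, if_pos (by omega : (m : ℤ) - (x : ℤ) - 1 ≤ 1),
          (by omega : m - x - 1 = 1), locoN_one]
        norm_num
      · rw [Nex, if_neg (by omega : ¬ (m : ℤ) - (x : ℤ) - 1 ≤ 1),
          (by omega : (m : ℤ) - (x : ℤ) - 1 = ((m - x - 1 : ℕ) : ℤ)), Int.toNat_natCast]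
    rw [e1, e2, e3, locoN_rec_big hx hbg]
    push_cast
    ring
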